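/- In E = ℓ^∞, the sequence (x_n), where x_n has its first n coordinates equal to 0 and all remaining coordinates equal to 1, satisfies x_n ↓ 0 (decreasing with infimum 0), yet x_n ∉ (-e₁, e₁) for every n, where e₁ = (1,0,0,...). Hence the open order interval (-e₁, e₁) is not open in the quasi-order topology τ_o on ℓ^∞. -/
import Mathlib


universe u
variable {E : Type u} [Lattice E] [AddCommGroup E] [CovariantClass E E (· + ·) (· ≤ ·)]

/-- A net `x` order converges to `a`: there is a downward directed set `S` of upper bounds
with infimum `0` such that each `y ∈ S` eventually dominates `|x α - a|`. -/
def OrderConv {ι : Type*} [Preorder ι] (x : ι → E) (a : E) : Prop :=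
  ∃ S : Set E, S.Nonempty ∧ DirectedOn (· ≥ ·) S ∧ IsGLB S 0 ∧
    ∀ y ∈ S, ∃ α₀, ∀ α, α₀ ≤ α → |x α - a| ≤ y

/-- `A` is quasi-order closed: whenever a net in `A` increases to its supremum `a`
or decreases to its infimum `a`, then `a ∈ A`. -/
def QuasiOrderClosed (A : Set E) : Prop :=
  ∀ (ι : Type u) [Preorder ι] [Nonempty ι] [IsDirected ι (· ≤ ·)]
    (x : ι → E) (a : E), (∀ α, x α ∈ A) →
    ((Monotone x ∧ IsLUB (Set.range x) a) ∨ (Antitone x ∧ IsGLB (Set.range x) a)) →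
    a ∈ A

/-- `A` is order closed: it contains the limits of order convergent nets contained in it. -/
def OrderClosedSet (A : Set E) : Prop :=
  ∀ (ι : Type u) [Preorder ι] [Nonempty ι] [IsDirected ι (· ≤ ·)]
    (x : ι → E) (a : E), (∀ α, x α ∈ A) → OrderConv x a → a ∈ A

/-- `A` is solid. -/
def Solid (A : Set E) : Prop := ∀ x ∈ A, ∀ y : E, |y| ≤ |x| → y ∈ A

/-- Dedekind completeness: every nonempty set bounded above has a supremum. -/
def DedekindComplete (E : Type u) [Lattice E] : Prop :=
  ∀ A : Set E, A.Nonempty → BddAbove A → ∃ s, IsLUB A s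

/-- `ℓ^∞`, realized as the bounded (automatically continuous) functions `ℕ → ℝ`,
with the pointwise (coordinatewise) order. -/
noncomputable abbrev Linf : Type := BoundedContinuousFunction ℕ ℝ

/-- `e₁ = (1,0,0,…)`. -/
noncomputable def eOne : Linf :=
  BoundedContinuousFunction.ofNormedAddCommGroup (fun k => if k = 0 then 1 else 0)
    continuous_of_discreteTopology 1 (by intro k; by_cases h : k = 0 <;> simp [h])

/-- `xSeq n` has its first `n` coordinates equal to `0` and the rest equal to `1`. -/
noncomputable def xSeq (n : ℕ) : Linf :=
  BoundedContinuousFunction.ofNormedAddCommGroup (fun k => if k < n then 0 else 1)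
    continuous_of_discreteTopology 1 (by intro k; by_cases h : k < n <;> simp [h])

lemma linf_le_iff {f g : Linf} : f ≤ g ↔ ∀ k, f k ≤ g k := Iff.rfl

lemma xSeq_apply (n k : ℕ) : xSeq n k = if k < n then 0 else 1 := rfl
lemma eOne_apply (k : ℕ) : eOne k = if k = 0 then 1 else 0 := rfl

lemma xSeq_anti : Antitone xSeq := by
  intro m n hmn
  rw [linf_le_iff]
  intro k
  rw [xSeq_apply, xSeq_apply]
  by_cases h : k < m
  · simp [h, lt_of_lt_of_le h hmn]
  · by_cases h2 : k < n <;> simp [h, h2]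

lemma xSeq_glb : IsGLB (Set.range xSeq) 0 := by
  constructor
  · rintro _ ⟨n, rfl⟩
    rw [linf_le_iff]
    intro k
    rw [xSeq_apply]
    show (0 : Linf) k ≤ _
    by_cases h : k < n <;> simp [h]
  · intro b hb
    rw [linf_le_iff]
    intro k
    have h1 := hb (Set.mem_range_self (k+1))
    rw [linf_le_iff] at h1
    have h2 := h1 k
    rw [xSeq_apply] at h2
    simpa [Nat.lt_succ_self k] using h2

lemma xSeq_not_mem (n : ℕ) : xSeq n ∉ Set.Ioo (-eOne) eOne := by
  rintro ⟨-, h2⟩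
  have h3 := h2.le
  rw [linf_le_iff] at h3
  have h4 := h3 (n + 1)
  rw [xSeq_apply, eOne_apply] at h4
  norm_num at h4

lemma zero_mem_Ioo : (0 : Linf) ∈ Set.Ioo (-eOne) eOne := by
  have hne : eOne ≠ 0 := by
    intro he
    have : eOne 0 = (0 : Linf) 0 := by rw [he]
    simp [eOne_apply] at this
  constructor
  · rw [lt_iff_le_and_ne]
    refine ⟨?_, fun he => hne (neg_eq_zero.mp he)⟩
    rw [linf_le_iff]
    intro k
    show -eOne k ≤ (0 : Linf) k
    rw [eOne_apply]
    by_cases h : k = 0 <;> simp [h]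
  · rw [lt_iff_le_and_ne]
    refine ⟨?_, fun he => hne he.symm⟩
    rw [linf_le_iff]
    intro k
    show (0 : Linf) k ≤ _
    rw [eOne_apply]
    by_cases h : k = 0 <;> simp [h]

/-- in `ℓ^∞`, the sequence `xSeq` decreases with infimum `0`, yet
`xSeq n ∉ (-e₁, e₁)` for every `n`; hence the open order interval `(-e₁, e₁)`
is not open in the quasi-order topology `τ_o`. -/
theorem interval_not_tauO_open :
    (Antitone xSeq ∧ IsGLB (Set.range xSeq) 0) ∧
    (∀ n : ℕ, xSeq n ∉ Set.Ioo (-eOne) eOne) ∧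
    ¬ QuasiOrderClosed (Set.Ioo (-eOne) eOne)ᶜ := by
  refine ⟨⟨xSeq_anti, xSeq_glb⟩, xSeq_not_mem, ?_⟩
  intro h
  exact h ℕ xSeq 0 xSeq_not_mem (Or.inr ⟨xSeq_anti, xSeq_glb⟩) zero_mem_Ioo
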